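/- Let f, {f_n} be proper convex lower semicontinuous functions on ℝ^d such that s_{f_n} epigraphically converges to s_f, and suppose there exist a sequence {x_n}, a point x̄ ∈ dom s_f, and α ∈ ℝ with {s_{f_n}(x_n)} bounded and (x_n, f_n(x_n)) → (x̄, α). Then dom s_f ⊂ dom f_l ∩ dom f_u and dom f_l ∪ dom f_u ⊂ closure(dom s_f) = closure(dom f). -/

import Mathlib

open Filter Topology MeasureTheory Set Metric RealInnerProductSpace
open scoped ENNReal NNReal

noncomputable section

def Proper {d : ℕ} (f : EuclideanSpace ℝ (Fin d) → EReal) : Prop :=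
  (∀ x, f x ≠ ⊥) ∧ ∃ x, f x ≠ ⊤

def ConvexFn {d : ℕ} (f : EuclideanSpace ℝ (Fin d) → EReal) : Prop :=
  Convex ℝ {p : EuclideanSpace ℝ (Fin d) × ℝ | f p.1 ≤ (p.2 : EReal)}

def Subdiff {d : ℕ} (f : EuclideanSpace ℝ (Fin d) → EReal) (x : EuclideanSpace ℝ (Fin d)) :
    Set (EuclideanSpace ℝ (Fin d)) :=
  {v | f x ≠ ⊤ ∧ ∀ y, f x + ((⟪v, y - x⟫ : ℝ) : EReal) ≤ f y}

def slopeFn {d : ℕ} (f : EuclideanSpace ℝ (Fin d) → EReal) (x : EuclideanSpace ℝ (Fin d)) : EReal :=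
  sInf ((fun v => (‖v‖ : EReal)) '' Subdiff f x)

def eLiminf {d : ℕ} (φ : ℕ → EuclideanSpace ℝ (Fin d) → EReal)
    (x : EuclideanSpace ℝ (Fin d)) : EReal :=
  ⨅ (u : ℕ → EuclideanSpace ℝ (Fin d)) (_ : Tendsto u atTop (𝓝 x)),
    Filter.liminf (fun n => φ n (u n)) atTop

def eLimsup {d : ℕ} (φ : ℕ → EuclideanSpace ℝ (Fin d) → EReal)
    (x : EuclideanSpace ℝ (Fin d)) : EReal :=
  ⨅ (u : ℕ → EuclideanSpace ℝ (Fin d)) (_ : Tendsto u atTop (𝓝 x)),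
    Filter.limsup (fun n => φ n (u n)) atTop

def EpiConv {d : ℕ} (φ : ℕ → EuclideanSpace ℝ (Fin d) → EReal)
    (ψ : EuclideanSpace ℝ (Fin d) → EReal) : Prop :=
  ∀ x, eLimsup φ x ≤ ψ x ∧ ψ x ≤ eLiminf φ x

def edom {d : ℕ} (h : EuclideanSpace ℝ (Fin d) → EReal) : Set (EuclideanSpace ℝ (Fin d)) :=
  {x | h x ≠ ⊤}

def rdom {d : ℕ} (h : EuclideanSpace ℝ (Fin d) → EReal) : Set (EuclideanSpace ℝ (Fin d)) :=
  {x | h x ≠ ⊤ ∧ h x ≠ ⊥}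

def domSub {d : ℕ} (f : EuclideanSpace ℝ (Fin d) → EReal) : Set (EuclideanSpace ℝ (Fin d)) :=
  {x | (Subdiff f x).Nonempty}

def erealToENNReal (x : EReal) : ℝ≥0∞ :=
  if x = ⊤ then ⊤ else ENNReal.ofReal x.toReal


lemma convexFn_ineq {g : EuclideanSpace ℝ (Fin d) → EReal} (hc : ConvexFn g)
    {p q : EuclideanSpace ℝ (Fin d)} {a b : ℝ}
    (hp : g p ≤ (a : EReal)) (hq : g q ≤ (b : EReal)) {s t : ℝ} (hs : 0 ≤ s) (ht : 0 ≤ t)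
    (hst : s + t = 1) : g (s • p + t • q) ≤ ((s * a + t * b : ℝ) : EReal) := by
  have h := hc (show ((p, a) : _ × ℝ) ∈ _ from hp) (show ((q, b) : _ × ℝ) ∈ _ from hq) hs ht hst
  simpa [Prod.smul_def, smul_eq_mul] using h

lemma lsc_min_on_compact {g : EuclideanSpace ℝ (Fin d) → EReal} (hl : LowerSemicontinuous g)
    {S : Set (EuclideanSpace ℝ (Fin d))} (hS : IsCompact S) (hne : S.Nonempty) :
    ∃ z ∈ S, ∀ y ∈ S, g z ≤ g y := by
  obtain ⟨u, -, hut, hum⟩ := exists_seq_tendsto_sInf (hne.image g) (OrderBot.bddBelow _)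
  choose y hyS hyg using hum
  obtain ⟨z, hzS, φ, hφ, hconv⟩ := hS.tendsto_subseq hyS
  refine ⟨z, hzS, fun w hw => ?_⟩
  have h1 : g z ≤ liminf (fun k => g (y (φ k))) atTop := by
    have h2 : g z ≤ liminf g (𝓝 z) := LowerSemicontinuousAt.le_liminf (hl z)
    refine h2.trans ?_
    have hmap : map (fun k => y (φ k)) atTop ≤ 𝓝 z := hconv
    have : liminf g (map (fun k => y (φ k)) atTop) = liminf (fun k => g (y (φ k))) atTop := by
      simp [Filter.liminf, Filter.map_map]; rfl
    rw [← this]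
    exact liminf_le_liminf_of_le hmap
  have h3 : Tendsto (fun k => g (y (φ k))) atTop (𝓝 (sInf (g '' S))) := by
    have : (fun k => g (y (φ k))) = (fun k => u (φ k)) := by
      funext k; exact hyg (φ k)
    rw [this]
    exact hut.comp hφ.tendsto_atTop
  rw [h3.liminf_eq] at h1
  exact h1.trans (sInf_le ⟨w, hw, rfl⟩)

lemma lsc_add_cont {g : EuclideanSpace ℝ (Fin d) → EReal} (hl : LowerSemicontinuous g)
    {q : EuclideanSpace ℝ (Fin d) → ℝ} (hq : Continuous q) :
    LowerSemicontinuous fun y => g y + ((q y : ℝ) : EReal) := by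
  have hq' : LowerSemicontinuous fun y => ((q y : ℝ) : EReal) :=
    (continuous_coe_real_ereal.comp hq).lowerSemicontinuous
  refine hl.add' hq' fun z => ?_
  exact EReal.continuousAt_add (Or.inr (EReal.coe_ne_bot _)) (Or.inr (EReal.coe_ne_top _))

set_option maxHeartbeats 1000000 in
lemma prox_step {g : EuclideanSpace ℝ (Fin d) → EReal} (hc : ConvexFn g)
    (hl : LowerSemicontinuous g)
    {w : EuclideanSpace ℝ (Fin d)} {b : ℝ}
    (hmin : ∀ y, ((⟪w, y⟫ + b : ℝ) : EReal) ≤ g y)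
    {u : EuclideanSpace ℝ (Fin d)} (hu : g u ≠ ⊤) {lam : ℝ} (hlam : 0 < lam) :
    ∃ z, (lam⁻¹ • (u - z)) ∈ Subdiff g z ∧
      (g z).toReal + ‖z - u‖ ^ 2 / (2 * lam) ≤ (g u).toReal := by
  classical
  have hbot : ∀ y, g y ≠ ⊥ := by
    intro y h
    have := hmin y
    rw [h, le_bot_iff] at this
    exact EReal.coe_ne_bot _ this
  set q : EuclideanSpace ℝ (Fin d) → ℝ := fun y => ‖y - u‖ ^ 2 / (2 * lam) with hqdef
  have hqc : Continuous q := (((continuous_id.sub continuous_const).norm.pow 2).div_const _)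
  set G : EuclideanSpace ℝ (Fin d) → EReal := fun y => g y + ((q y : ℝ) : EReal) with hGdef
  have hG : LowerSemicontinuous G := lsc_add_cont hl hqc
  have hq0 : ∀ y, 0 ≤ q y := fun y => by positivity
  have hqu : q u = 0 := by simp [hqdef]
  have hGu : G u = g u := by simp [hGdef, hqu]
  set gu : ℝ := (g u).toReal with hgud
  have hgu : g u = (gu : EReal) := (EReal.coe_toReal hu (hbot u)).symm
  have h2lam : (0:ℝ) < 2 * lam := by linarith
  set R : ℝ := max 1 (2 * lam * |gu - b - ⟪w, u⟫| + 2 * lam * ‖w‖) with hRdef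
  have hR1 : (1:ℝ) ≤ R := le_max_left _ _
  have hR0 : (0:ℝ) < R := lt_of_lt_of_le one_pos hR1
  -- sublevel bound
  have hbound : ∀ y, G y ≤ G u → ‖y - u‖ ≤ R := by
    intro y hy
    have h1 : ((⟪w, y⟫ + b : ℝ) : EReal) + ((q y : ℝ) : EReal) ≤ (gu : EReal) := by
      calc ((⟪w, y⟫ + b : ℝ) : EReal) + ((q y : ℝ) : EReal)
          ≤ g y + ((q y : ℝ) : EReal) := add_le_add (hmin y) le_rfl
        _ = G y := rfl
        _ ≤ G u := hy
        _ = (gu : EReal) := by rw [hGu, hgu]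
    rw [← EReal.coe_add] at h1
    have h2 : ⟪w, y⟫ + b + q y ≤ gu := by exact_mod_cast h1
    have h3 : ⟪w, y - u⟫ = ⟪w, y⟫ - ⟪w, u⟫ := inner_sub_right _ _ _
    have h4 : |⟪w, y - u⟫| ≤ ‖w‖ * ‖y - u‖ := abs_real_inner_le_norm _ _
    set s : ℝ := ‖y - u‖ with hs
    have hs0 : 0 ≤ s := norm_nonneg _
    have h5 : s ^ 2 / (2 * lam) ≤ (gu - b - ⟪w, u⟫) + ‖w‖ * s := by
      have := neg_abs_le ⟪w, y - u⟫
      simp only [hqdef] at h2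
      nlinarith [h4, h2, h3]
    have h6 : s ^ 2 ≤ 2 * lam * |gu - b - ⟪w, u⟫| + 2 * lam * ‖w‖ * s := by
      have h7 := mul_le_mul_of_nonneg_left h5 h2lam.le
      rw [mul_div_cancel₀ _ h2lam.ne'] at h7
      have := le_abs_self (gu - b - ⟪w, u⟫)
      nlinarith
    rcases le_or_gt s 1 with h | h
    · exact h.trans hR1
    · have h8 : s ≤ 2 * lam * |gu - b - ⟪w, u⟫| + 2 * lam * ‖w‖ := by
        nlinarith [h6, mul_le_mul_of_nonneg_left h.le
          (mul_nonneg h2lam.le (abs_nonneg (gu - b - ⟪w, u⟫))),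
          mul_nonneg (mul_nonneg h2lam.le (norm_nonneg w)) hs0]
      exact h8.trans (le_max_right _ _)
  -- minimize over the ball
  obtain ⟨z, hzB, hzmin⟩ := lsc_min_on_compact hG (isCompact_closedBall u R)
    ⟨u, mem_closedBall_self hR0.le⟩
  have huB : u ∈ closedBall u R := mem_closedBall_self hR0.le
  have hglob : ∀ y, G z ≤ G y := by
    intro y
    by_cases hy : y ∈ closedBall u R
    · exact hzmin y hy
    · have h5 : ¬ G y ≤ G u := fun h =>
        hy (by rw [mem_closedBall, dist_eq_norm]; exact hbound y h)
      exact (hzmin u huB).trans (not_le.mp h5).le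
  have hGz_le : G z ≤ G u := hglob u
  have hgz_top : g z ≠ ⊤ := by
    intro h
    have hGz : G z = ⊤ := by simp [hGdef, h]
    rw [hGz, hGu, hgu] at hGz_le
    exact (EReal.coe_ne_top gu) (top_le_iff.mp hGz_le)
  set gz : ℝ := (g z).toReal with hgzd
  have hgz : g z = (gz : EReal) := (EReal.coe_toReal hgz_top (hbot z)).symm
  have henergy : gz + q z ≤ gu := by
    have : ((gz + q z : ℝ) : EReal) ≤ ((gu : ℝ) : EReal) := by
      rw [EReal.coe_add, ← hgz, ← hgu, ← hGu]
      exact hGz_le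
    exact_mod_cast this
  refine ⟨z, ⟨hgz_top, ?_⟩, henergy⟩
  intro y
  by_cases hgy_top : g y = ⊤
  · simp [hgy_top]
  set gy : ℝ := (g y).toReal with hgyd
  have hgy : g y = (gy : EReal) := (EReal.coe_toReal hgy_top (hbot y)).symm
  set v : EuclideanSpace ℝ (Fin d) := lam⁻¹ • (u - z) with hvdef
  suffices hsuf : gz + ⟪v, y - z⟫ ≤ gy by
    rw [hgz, hgy, ← EReal.coe_add]
    exact_mod_cast hsuf
  set N : ℝ := ‖y - z‖ ^ 2 with hNdef
  have hN0 : 0 ≤ N := sq_nonneg _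
  have hvinner : ⟪v, y - z⟫ = ⟪u - z, y - z⟫ / lam := by
    rw [hvdef, real_inner_smul_left]; ring
  have key : ∀ t : ℝ, 0 < t → t ≤ 1 → ⟪v, y - z⟫ - t * (N / (2 * lam)) ≤ gy - gz := by
    intro t ht0 ht1
    set zt : EuclideanSpace ℝ (Fin d) := (1 - t) • z + t • y with hztdef
    have hcomb : g zt ≤ (((1 - t) * gz + t * gy : ℝ) : EReal) :=
      convexFn_ineq hc (le_of_eq hgz) (le_of_eq hgy) (by linarith) ht0.le (by ring)
    have hGzzt : G z ≤ G zt := hglob zt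
    have hzt_top : g zt ≠ ⊤ := fun h => by
      rw [h] at hcomb; exact (EReal.coe_ne_top _) (top_le_iff.mp hcomb)
    have hA : g zt = (((g zt).toReal : ℝ) : EReal) := (EReal.coe_toReal hzt_top (hbot zt)).symm
    have hcomb' : (g zt).toReal ≤ (1 - t) * gz + t * gy := by
      rw [hA] at hcomb; exact_mod_cast hcomb
    have hGzzt' : gz + q z ≤ (g zt).toReal + q zt := by
      have h9 : ((gz + q z : ℝ) : EReal) ≤ (((g zt).toReal + q zt : ℝ) : EReal) := by
        rw [EReal.coe_add, EReal.coe_add, ← hgz, ← hA]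
        exact hGzzt
      exact_mod_cast h9
    have hzt_u : zt - u = (z - u) + t • (y - z) := by
      rw [hztdef]; module
    have hexp : ‖zt - u‖ ^ 2 = ‖z - u‖ ^ 2 + 2 * (t * ⟪z - u, y - z⟫) + t ^ 2 * N := by
      rw [hzt_u, norm_add_sq_real, real_inner_smul_right, norm_smul, hNdef, mul_pow,
        Real.norm_eq_abs, sq_abs]
    have hIneg : ⟪u - z, y - z⟫ = -⟪z - u, y - z⟫ := by
      rw [show u - z = -(z - u) by abel, inner_neg_left]
    set I : ℝ := ⟪z - u, y - z⟫ with hIdef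
    -- clear denominators
    have hqz : q z = ‖z - u‖ ^ 2 / (2 * lam) := rfl
    have hqzt : q zt = ‖zt - u‖ ^ 2 / (2 * lam) := rfl
    have hmain : gz + ‖z - u‖ ^ 2 / (2 * lam) ≤
        (1 - t) * gz + t * gy + (‖z - u‖ ^ 2 + 2 * (t * I) + t ^ 2 * N) / (2 * lam) := by
      calc gz + ‖z - u‖ ^ 2 / (2 * lam) ≤ (g zt).toReal + q zt := hGzzt'
        _ ≤ (1 - t) * gz + t * gy + (‖z - u‖ ^ 2 + 2 * (t * I) + t ^ 2 * N) / (2 * lam) := by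
            rw [hqzt, hexp]; linarith [hcomb']
    have hmul := mul_le_mul_of_nonneg_right hmain h2lam.le
    rw [add_mul, add_mul, div_mul_cancel₀ _ h2lam.ne'] at hmul
    rw [add_mul, div_mul_cancel₀ _ h2lam.ne'] at hmul
    -- now: gz*(2λ) + ‖z-u‖² ≤ ((1-t)gz + t gy)*(2λ) + ‖z-u‖² + 2tI + t²N
    have hstep : 2 * lam * t * gz ≤ 2 * lam * t * gy + 2 * t * I + t ^ 2 * N := by nlinarith [hmul]
    -- divide by t and 2λ
    have hgoal2 : (⟪v, y - z⟫ - t * (N / (2 * lam))) * (2 * lam * t) ≤ (gy - gz) * (2 * lam * t) := by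
      have hlhs : (⟪v, y - z⟫ - t * (N / (2 * lam))) * (2 * lam * t) = -(2 * t * I) - t ^ 2 * N := by
        rw [hvinner, hIneg, hIdef]
        field_simp
      rw [hlhs]
      linarith [hstep]
    exact le_of_mul_le_mul_right hgoal2 (by positivity)
  refine le_of_forall_pos_le_add fun ε hε => ?_
  set c : ℝ := N / (2 * lam) with hcdef
  have hc0 : 0 ≤ c := by positivity
  set t : ℝ := min 1 (ε / (c + 1)) with htdef
  have ht0 : 0 < t := lt_min one_pos (div_pos hε (by linarith))
  have ht1 : t ≤ 1 := min_le_left _ _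
  have htc : t * c ≤ ε := by
    have h1 : t * c ≤ (ε / (c + 1)) * c := mul_le_mul_of_nonneg_right (min_le_right _ _) hc0
    have h2 : (ε / (c + 1)) * c ≤ (ε / (c + 1)) * (c + 1) :=
      mul_le_mul_of_nonneg_left (by linarith) (by positivity)
    rw [div_mul_cancel₀ _ (by linarith : c + 1 ≠ 0)] at h2
    linarith
  have := key t ht0 ht1
  linarith


lemma slope_le_norm {f : EuclideanSpace ℝ (Fin d) → EReal} {x v : EuclideanSpace ℝ (Fin d)}
    (hv : v ∈ Subdiff f x) : slopeFn f x ≤ (‖v‖ : EReal) :=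
  sInf_le ⟨v, hv, rfl⟩

lemma exists_subdiff_of_slope_lt {f : EuclideanSpace ℝ (Fin d) → EReal}
    {x : EuclideanSpace ℝ (Fin d)} {c : EReal}
    (h : slopeFn f x < c) : ∃ v ∈ Subdiff f x, (‖v‖ : EReal) < c := by
  obtain ⟨y, hy, hyc⟩ := sInf_lt_iff.mp h
  obtain ⟨v, hv, rfl⟩ := hy
  exact ⟨v, hv, hyc⟩

lemma subgrad_real {f : EuclideanSpace ℝ (Fin d) → EReal} {x v : EuclideanSpace ℝ (Fin d)}
    (hv : v ∈ Subdiff f x) (hb : f x ≠ ⊥) (y : EuclideanSpace ℝ (Fin d)) :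
    (((f x).toReal + ⟪v, y - x⟫ : ℝ) : EReal) ≤ f y := by
  have h1 := hv.2 y
  rw [EReal.coe_add, EReal.coe_toReal hv.1 hb]
  exact h1

lemma quad_bound {s ε a : ℝ} (hs : 0 ≤ s) (hε0 : 0 < ε) (hε1 : ε ≤ 1)
    (ha0 : 0 ≤ a) (ha : a ≤ ε ^ 2 / 2) (h : s ^ 2 ≤ a + a * s) : s ≤ ε := by
  rcases le_or_gt s 1 with h1 | h1
  · nlinarith [sq_nonneg (s - ε)]
  · have ha' : a ≤ a * s := le_mul_of_one_le_right ha0 h1.le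
    have h2 : s * s ≤ (2 * a) * s := by nlinarith
    have h3 : s ≤ 2 * a := le_of_mul_le_mul_right h2 (lt_trans one_pos h1)
    nlinarith

lemma prox_near {g : EuclideanSpace ℝ (Fin d) → EReal} (hc : ConvexFn g)
    (hl : LowerSemicontinuous g)
    {w : EuclideanSpace ℝ (Fin d)} {b : ℝ}
    (hmin : ∀ y, ((⟪w, y⟫ + b : ℝ) : EReal) ≤ g y)
    {u : EuclideanSpace ℝ (Fin d)} {r : ℝ} (hur : g u ≤ (r : EReal))
    {ε C W0 lam : ℝ} (hC : r - b - ⟪w, u⟫ ≤ C) (hW : ‖w‖ ≤ W0)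
    (hε0 : 0 < ε) (hε1 : ε ≤ 1) (hlam : 0 < lam)
    (hsmall : 2 * lam * (max C 0 + W0) ≤ ε ^ 2 / 2) :
    ∃ z, (Subdiff g z).Nonempty ∧ ‖z - u‖ ≤ ε ∧ slopeFn g z ≤ ((ε / lam : ℝ) : EReal) := by
  have hbot : ∀ y, g y ≠ ⊥ := by
    intro y h
    have := hmin y
    rw [h, le_bot_iff] at this
    exact EReal.coe_ne_bot _ this
  have hutop : g u ≠ ⊤ := fun h => by
    rw [h] at hur; exact (EReal.coe_ne_top r) (top_le_iff.mp hur)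
  obtain ⟨z, hzsub, henergy⟩ := prox_step hc hl hmin hutop hlam
  have hW0 : 0 ≤ W0 := (norm_nonneg w).trans hW
  set s : ℝ := ‖z - u‖ with hsdef
  have hs0 : 0 ≤ s := norm_nonneg _
  -- real bounds
  have hru : (g u).toReal ≤ r := by
    rw [← EReal.coe_le_coe_iff, EReal.coe_toReal hutop (hbot u)]
    exact hur
  have hztop : g z ≠ ⊤ := hzsub.1
  have hzlb : ⟪w, z⟫ + b ≤ (g z).toReal := by
    rw [← EReal.coe_le_coe_iff, EReal.coe_toReal hztop (hbot z)]
    exact hmin z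
  have hinner : ⟪w, u⟫ - W0 * s ≤ ⟪w, z⟫ := by
    have h1 : ⟪w, z - u⟫ = ⟪w, z⟫ - ⟪w, u⟫ := inner_sub_right _ _ _
    have h2 : |⟪w, z - u⟫| ≤ ‖w‖ * ‖z - u‖ := abs_real_inner_le_norm _ _
    have h3 := neg_abs_le ⟪w, z - u⟫
    nlinarith [mul_le_mul_of_nonneg_right hW hs0]
  have hsq : s ^ 2 ≤ 2 * lam * (max C 0 + W0) + 2 * lam * (max C 0 + W0) * s := by
    have h2lam : (0:ℝ) < 2 * lam := by linarith
    have h4 : s ^ 2 / (2 * lam) ≤ C + W0 * s := by nlinarith [henergy]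
    have h5 := mul_le_mul_of_nonneg_left h4 h2lam.le
    rw [mul_div_cancel₀ _ h2lam.ne'] at h5
    have h6 : C ≤ max C 0 := le_max_left _ _
    nlinarith [mul_nonneg (mul_nonneg h2lam.le (le_max_right C 0)) hs0,
      mul_le_mul_of_nonneg_left h6 h2lam.le, mul_nonneg h2lam.le hW0]
  have hse : s ≤ ε := quad_bound hs0 hε0 hε1 (by positivity) hsmall hsq
  refine ⟨z, ⟨_, hzsub⟩, hse, ?_⟩
  refine (slope_le_norm hzsub).trans ?_
  rw [EReal.coe_le_coe_iff]
  rw [norm_smul, Real.norm_eq_abs, abs_inv, abs_of_pos hlam, norm_sub_rev]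
  rw [inv_mul_eq_div]
  exact div_le_div_of_nonneg_right hse hlam.le

lemma liminf_le_comp_strictMono {u : ℕ → EReal} {τ : ℕ → ℕ} (hτ : StrictMono τ) :
    liminf u atTop ≤ liminf (fun k => u (τ k)) atTop := by
  have hmap : map τ atTop ≤ atTop := hτ.tendsto_atTop
  have h : liminf u (map τ atTop) = liminf (fun k => u (τ k)) atTop := by
    simp [Filter.liminf, Filter.map_map]; rfl
  rw [← h]
  exact liminf_le_liminf_of_le hmap

lemma eLiminf_le_eLimsup (φ : ℕ → EuclideanSpace ℝ (Fin d) → EReal)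
    (x' : EuclideanSpace ℝ (Fin d)) : eLiminf φ x' ≤ eLimsup φ x' :=
  iInf_mono fun _ => iInf_mono fun _ => liminf_le_limsup

lemma eLiminf_lower {fs : ℕ → EuclideanSpace ℝ (Fin d) → EReal}
    (hps : ∀ n, Proper (fs n))
    {x : ℕ → EuclideanSpace ℝ (Fin d)} {xbar : EuclideanSpace ℝ (Fin d)} {α M : ℝ}
    (hM : ∀ n, slopeFn (fs n) (x n) ≤ (M : EReal))
    (hx : Tendsto x atTop (𝓝 xbar))
    (hval : Tendsto (fun n => fs n (x n)) atTop (𝓝 ((α : EReal))))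
    (x' : EuclideanSpace ℝ (Fin d)) {u : ℕ → EuclideanSpace ℝ (Fin d)}
    (hu : Tendsto u atTop (𝓝 x')) :
    ((α - 1 - (M + 1) * (‖x' - xbar‖ + 1) : ℝ) : EReal) ≤ liminf (fun n => fs n (u n)) atTop := by
  have hwex : ∀ n, ∃ w ∈ Subdiff (fs n) (x n), ‖w‖ < M + 1 := by
    intro n
    have h1 : slopeFn (fs n) (x n) < ((M + 1 : ℝ) : EReal) :=
      lt_of_le_of_lt (hM n) (EReal.coe_lt_coe_iff.mpr (by linarith))
    obtain ⟨w, hw, hwn⟩ := exists_subdiff_of_slope_lt h1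
    exact ⟨w, hw, EReal.coe_lt_coe_iff.mp hwn⟩
  choose w hw hwn using hwex
  have hM1 : 0 ≤ M + 1 := le_trans (norm_nonneg (w 0)) (hwn 0).le
  have E1 : ∀ᶠ n in atTop, ((α - 1 : ℝ) : EReal) < fs n (x n) :=
    hval.eventually_const_lt (EReal.coe_lt_coe_iff.mpr (by linarith))
  have E2 : ∀ᶠ n in atTop, ‖u n - x n‖ < ‖x' - xbar‖ + 1 :=
    ((hu.sub hx).norm).eventually_lt_const (lt_add_one _)
  refine le_liminf_of_le (by isBoundedDefault) ?_
  filter_upwards [E1, E2] with n h1 h2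
  have htop : fs n (x n) ≠ ⊤ := (hw n).1
  have hbot : fs n (x n) ≠ ⊥ := (hps n).1 _
  have h3 : α - 1 ≤ (fs n (x n)).toReal := by
    rw [← EReal.coe_le_coe_iff, EReal.coe_toReal htop hbot]
    exact h1.le
  refine le_trans ?_ (subgrad_real (hw n) hbot (u n))
  rw [EReal.coe_le_coe_iff]
  have h5 : |⟪w n, u n - x n⟫| ≤ ‖w n‖ * ‖u n - x n‖ := abs_real_inner_le_norm _ _
  have h6 := neg_abs_le ⟪w n, u n - x n⟫
  have h7 : ‖w n‖ * ‖u n - x n‖ ≤ (M + 1) * (‖x' - xbar‖ + 1) :=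
    mul_le_mul (hwn n).le h2.le (norm_nonneg _) hM1
  linarith

lemma eLiminf_lower' {fs : ℕ → EuclideanSpace ℝ (Fin d) → EReal}
    (hps : ∀ n, Proper (fs n))
    {x : ℕ → EuclideanSpace ℝ (Fin d)} {xbar : EuclideanSpace ℝ (Fin d)} {α M : ℝ}
    (hM : ∀ n, slopeFn (fs n) (x n) ≤ (M : EReal))
    (hx : Tendsto x atTop (𝓝 xbar))
    (hval : Tendsto (fun n => fs n (x n)) atTop (𝓝 ((α : EReal))))
    (x' : EuclideanSpace ℝ (Fin d)) :
    ((α - 1 - (M + 1) * (‖x' - xbar‖ + 1) : ℝ) : EReal) ≤ eLiminf fs x' :=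
  le_iInf fun u => le_iInf fun hu => eLiminf_lower hps hM hx hval x' hu

lemma eLimsup_upper {f : EuclideanSpace ℝ (Fin d) → EReal}
    {fs : ℕ → EuclideanSpace ℝ (Fin d) → EReal}
    (hps : ∀ n, Proper (fs n))
    (hepi : EpiConv (fun n => slopeFn (fs n)) (slopeFn f))
    {x : ℕ → EuclideanSpace ℝ (Fin d)} {xbar : EuclideanSpace ℝ (Fin d)} {α : ℝ}
    (hx : Tendsto x atTop (𝓝 xbar))
    (hval : Tendsto (fun n => fs n (x n)) atTop (𝓝 ((α : EReal))))
    {x' : EuclideanSpace ℝ (Fin d)} (hx' : x' ∈ domSub f) :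
    ∃ r : ℝ, eLimsup fs x' ≤ (r : EReal) := by
  obtain ⟨v₀, hv₀⟩ := hx'
  set c : ℝ := ‖v₀‖ + 1 with hcdef
  have h1 : eLimsup (fun n => slopeFn (fs n)) x' < (c : EReal) := by
    refine lt_of_le_of_lt ((hepi x').1.trans (slope_le_norm hv₀)) ?_
    exact EReal.coe_lt_coe_iff.mpr (lt_add_one _)
  unfold eLimsup at h1
  obtain ⟨u, hu'⟩ := iInf_lt_iff.mp h1
  obtain ⟨hu, hlimsup⟩ := iInf_lt_iff.mp hu'
  have E0 : ∀ᶠ n in atTop, slopeFn (fs n) (u n) < (c : EReal) :=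
    eventually_lt_of_limsup_lt hlimsup
  have E1 : ∀ᶠ n in atTop, fs n (x n) < ((α + 1 : ℝ) : EReal) :=
    hval.eventually_lt_const (EReal.coe_lt_coe_iff.mpr (lt_add_one _))
  have E2 : ∀ᶠ n in atTop, ‖x n - u n‖ < ‖xbar - x'‖ + 1 :=
    ((hx.sub hu).norm).eventually_lt_const (lt_add_one _)
  refine ⟨α + 1 + c * (‖xbar - x'‖ + 1), ?_⟩
  refine le_trans (iInf₂_le u hu) ?_
  refine limsup_le_of_le (by isBoundedDefault) ?_
  filter_upwards [E0, E1, E2] with n h0 h1 h2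
  obtain ⟨v, hv, hvn⟩ := exists_subdiff_of_slope_lt h0
  have hvn' : ‖v‖ ≤ c := (EReal.coe_lt_coe_iff.mp hvn).le
  have hbot := (hps n).1 (u n)
  have h4 := (subgrad_real hv hbot (x n)).trans h1.le
  rw [EReal.coe_le_coe_iff] at h4
  have h5 : (fs n (u n)).toReal ≤ α + 1 + c * (‖xbar - x'‖ + 1) := by
    have h6 : |⟪v, x n - u n⟫| ≤ ‖v‖ * ‖x n - u n‖ := abs_real_inner_le_norm _ _
    have hc0 : 0 ≤ c := le_trans (norm_nonneg v) hvn'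
    have h7 : ‖v‖ * ‖x n - u n‖ ≤ c * (‖xbar - x'‖ + 1) :=
      mul_le_mul hvn' h2.le (norm_nonneg _) hc0
    have h8 := neg_abs_le ⟪v, x n - u n⟫
    linarith
  calc fs n (u n) = ((fs n (u n)).toReal : EReal) := (EReal.coe_toReal hv.1 hbot).symm
    _ ≤ _ := EReal.coe_le_coe_iff.mpr h5

lemma edom_subset_closure_domSub {f : EuclideanSpace ℝ (Fin d) → EReal}
    (hpf : Proper f) (hcf : ConvexFn f) (hlf : LowerSemicontinuous f)
    {xbar : EuclideanSpace ℝ (Fin d)} (hxbar : xbar ∈ domSub f) :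
    edom f ⊆ closure (domSub f) := by
  obtain ⟨vb, hvb⟩ := hxbar
  set bb : ℝ := (f xbar).toReal - ⟪vb, xbar⟫ with hbbdef
  have hmin : ∀ y, ((⟪vb, y⟫ + bb : ℝ) : EReal) ≤ f y := by
    intro y
    refine le_of_eq_of_le ?_ (subgrad_real hvb (hpf.1 xbar) y)
    congr 1
    rw [inner_sub_right, hbbdef]; ring
  intro u hu
  rw [Metric.mem_closure_iff]
  intro δ hδ
  set ε : ℝ := min (δ / 2) 1 with hεdef
  have hε0 : 0 < ε := lt_min (by linarith) one_pos
  have hε1 : ε ≤ 1 := min_le_right _ _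
  set r : ℝ := (f u).toReal with hrdef
  have hur : f u ≤ (r : EReal) := le_of_eq (EReal.coe_toReal hu (hpf.1 u)).symm
  set C : ℝ := r - bb - ⟪vb, u⟫ with hCdef
  set W0 : ℝ := ‖vb‖ with hW0def
  set D : ℝ := max C 0 + W0 + 1 with hDdef
  have hD : 0 < D := by positivity
  set lam : ℝ := ε ^ 2 / (4 * D) with hlamdef
  have hlam : 0 < lam := by positivity
  have hsmall : 2 * lam * (max C 0 + W0) ≤ ε ^ 2 / 2 := by
    have h1 : max C 0 + W0 ≤ D := by rw [hDdef]; linarith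
    have h2 : (0:ℝ) ≤ 2 * lam := by positivity
    calc 2 * lam * (max C 0 + W0) ≤ 2 * lam * D := mul_le_mul_of_nonneg_left h1 h2
      _ = ε ^ 2 / 2 := by rw [hlamdef]; field_simp; ring
  obtain ⟨z, hz1, hz2, -⟩ :=
    prox_near hcf hlf hmin hur (le_refl C) (le_refl W0) hε0 hε1 hlam hsmall
  refine ⟨z, hz1, ?_⟩
  rw [dist_eq_norm, norm_sub_rev]
  calc ‖z - u‖ ≤ ε := hz2
    _ ≤ δ / 2 := min_le_left _ _
    _ < δ := by linarith

set_option maxHeartbeats 1000000 in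
lemma mem_closure_of_eLiminf_ne_top {f : EuclideanSpace ℝ (Fin d) → EReal}
    {fs : ℕ → EuclideanSpace ℝ (Fin d) → EReal}
    (hps : ∀ n, Proper (fs n)) (hcs : ∀ n, ConvexFn (fs n))
    (hls : ∀ n, LowerSemicontinuous (fs n))
    (hepi : EpiConv (fun n => slopeFn (fs n)) (slopeFn f))
    {x : ℕ → EuclideanSpace ℝ (Fin d)} {xbar : EuclideanSpace ℝ (Fin d)} {α M : ℝ}
    (hM : ∀ n, slopeFn (fs n) (x n) ≤ (M : EReal))
    (hx : Tendsto x atTop (𝓝 xbar))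
    (hval : Tendsto (fun n => fs n (x n)) atTop (𝓝 ((α : EReal))))
    {x' : EuclideanSpace ℝ (Fin d)} (hx'top : eLiminf fs x' ≠ ⊤) :
    x' ∈ closure (domSub f) := by
  classical
  -- subgradients at x n with uniform bound
  have hwex : ∀ n, ∃ w ∈ Subdiff (fs n) (x n), ‖w‖ < M + 1 := by
    intro n
    have h1 : slopeFn (fs n) (x n) < ((M + 1 : ℝ) : EReal) :=
      lt_of_le_of_lt (hM n) (EReal.coe_lt_coe_iff.mpr (by linarith))
    obtain ⟨w, hw, hwn⟩ := exists_subdiff_of_slope_lt h1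
    exact ⟨w, hw, EReal.coe_lt_coe_iff.mp hwn⟩
  choose w hw hwn using hwex
  have hM1 : 0 ≤ M + 1 := le_trans (norm_nonneg (w 0)) (hwn 0).le
  have hbotn : ∀ n y, fs n y ≠ ⊥ := fun n y => (hps n).1 y
  set bc : ℕ → ℝ := fun n => (fs n (x n)).toReal - ⟪w n, x n⟫ with hbcdef
  have hminor : ∀ n y, ((⟪w n, y⟫ + bc n : ℝ) : EReal) ≤ fs n y := by
    intro n y
    refine le_of_eq_of_le ?_ (subgrad_real (hw n) (hbotn n _) y)
    congr 1
    rw [inner_sub_right, hbcdef]; ring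
  -- a real bound for eLiminf
  obtain ⟨R, hR1, hR2⟩ := EReal.exists_between_coe_real (lt_top_iff_ne_top.mpr hx'top)
  unfold eLiminf at hR1
  obtain ⟨u, hu'⟩ := iInf_lt_iff.mp hR1
  obtain ⟨hu, hliminf⟩ := iInf_lt_iff.mp hu'
  have hfreq : ∃ᶠ n in atTop, fs n (u n) < (R : EReal) :=
    frequently_lt_of_liminf_lt (by isBoundedDefault) hliminf
  rw [Metric.mem_closure_iff]
  intro δ hδ
  set ε : ℝ := min (δ / 3) 1 with hεdef
  have hε0 : 0 < ε := lt_min (by linarith) one_pos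
  have hε1 : ε ≤ 1 := min_le_right _ _
  have hεδ : 2 * ε < δ := by
    have : ε ≤ δ / 3 := min_le_left _ _
    linarith
  set B : ℝ := ‖x' - xbar‖ + 1 with hBdef
  set C : ℝ := R - (α - 1) + (M + 1) * B with hCdef
  set W0 : ℝ := M + 1 with hW0def
  set D : ℝ := max C 0 + W0 + 1 with hDdef
  have hD : 0 < D := by positivity
  set lam : ℝ := ε ^ 2 / (4 * D) with hlamdef
  have hlam : 0 < lam := by positivity
  set K : ℝ := ε / lam with hKdef
  have hsmall : 2 * lam * (max C 0 + W0) ≤ ε ^ 2 / 2 := by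
    have h1 : max C 0 + W0 ≤ D := by rw [hDdef]; linarith
    have h2 : (0:ℝ) ≤ 2 * lam := by positivity
    calc 2 * lam * (max C 0 + W0) ≤ 2 * lam * D := mul_le_mul_of_nonneg_left h1 h2
      _ = ε ^ 2 / 2 := by rw [hlamdef]; field_simp; ring
  -- eventual facts
  have E1 : ∀ᶠ n in atTop, ((α - 1 : ℝ) : EReal) < fs n (x n) :=
    hval.eventually_const_lt (EReal.coe_lt_coe_iff.mpr (by linarith))
  have E2 : ∀ᶠ n in atTop, ‖u n - x n‖ < B :=
    ((hu.sub hx).norm).eventually_lt_const (lt_add_one _)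
  have E3 : ∀ᶠ n in atTop, ‖u n - x'‖ < ε := by
    have h1 : Tendsto (fun n => ‖u n - x'‖) atTop (𝓝 0) := by
      have := (hu.sub (tendsto_const_nhds : Tendsto (fun _ : ℕ => x') atTop _)).norm
      simpa using this
    exact h1.eventually_lt_const hε0
  have hfreq2 := hfreq.and_eventually (E1.and (E2.and E3))
  obtain ⟨σ, hσ, hσP⟩ := extraction_of_frequently_atTop hfreq2
  -- apply prox_near along the subsequence
  have hzex : ∀ k, ∃ z, (Subdiff (fs (σ k)) z).Nonempty ∧
      slopeFn (fs (σ k)) z ≤ ((K : ℝ) : EReal) ∧ z ∈ closedBall x' (2 * ε) := by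
    intro k
    obtain ⟨hfu, h1, h2, h3⟩ := hσP k
    set n := σ k
    have hur : fs n (u n) ≤ (R : EReal) := hfu.le
    have htopn : fs n (x n) ≠ ⊤ := (hw n).1
    have htor : α - 1 ≤ (fs n (x n)).toReal := by
      rw [← EReal.coe_le_coe_iff, EReal.coe_toReal htopn (hbotn n _)]
      exact h1.le
    have hC : R - bc n - ⟪w n, u n⟫ ≤ C := by
      have hi : ⟪w n, x n - u n⟫ = ⟪w n, x n⟫ - ⟪w n, u n⟫ := inner_sub_right _ _ _
      have habs : |⟪w n, x n - u n⟫| ≤ ‖w n‖ * ‖x n - u n‖ := abs_real_inner_le_norm _ _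
      have hnn : ‖x n - u n‖ = ‖u n - x n‖ := norm_sub_rev _ _
      have h7 : ‖w n‖ * ‖x n - u n‖ ≤ W0 * B := by
        rw [hnn]
        exact mul_le_mul (hwn n).le h2.le (norm_nonneg _) hM1
      have h8 := le_abs_self ⟪w n, x n - u n⟫
      rw [hbcdef, hCdef]
      simp only
      linarith
    have hW : ‖w n‖ ≤ W0 := (hwn n).le
    obtain ⟨z, hz1, hz2, hz3⟩ :=
      prox_near (hcs n) (hls n) (hminor n) hur hC hW hε0 hε1 hlam hsmall
    refine ⟨z, hz1, hz3, ?_⟩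
    rw [mem_closedBall, dist_eq_norm]
    calc ‖z - x'‖ ≤ ‖z - u n‖ + ‖u n - x'‖ := norm_sub_le_norm_sub_add_norm_sub _ _ _
      _ ≤ ε + ε := add_le_add hz2 h3.le
      _ = 2 * ε := by ring
  choose zs hzsub hzslope hzball using hzex
  obtain ⟨zstar, hzstarB, ψ, hψ, hconv⟩ :=
    (isCompact_closedBall x' (2 * ε)).tendsto_subseq hzball
  set τ : ℕ → ℕ := σ ∘ ψ with hτdef
  have hτm : StrictMono τ := hσ.comp hψ
  set W : ℕ → EuclideanSpace ℝ (Fin d) :=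
    fun n => if h : ∃ k, τ k = n then zs (ψ h.choose) else zstar with hWdef
  have hWτ : ∀ k, W (τ k) = zs (ψ k) := by
    intro k
    have hex : ∃ j, τ j = τ k := ⟨k, rfl⟩
    have hch : hex.choose = k := hτm.injective hex.choose_spec
    rw [hWdef]
    simp only [dif_pos hex, hch]
  have hWt : Tendsto W atTop (𝓝 zstar) := by
    rw [Metric.tendsto_atTop]
    intro δ' hδ'
    obtain ⟨K₀, hK₀⟩ := Metric.tendsto_atTop.mp hconv δ' hδ'
    refine ⟨τ K₀ + 1, fun n hn => ?_⟩
    by_cases h : ∃ k, τ k = n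
    · have hcs' := h.choose_spec
      have hgt : K₀ < h.choose := by
        refine hτm.lt_iff_lt.mp ?_
        rw [hcs']
        omega
      rw [hWdef]
      simp only [dif_pos h]
      exact hK₀ _ hgt.le
    · rw [hWdef]
      simp only [dif_neg h, dist_self]
      exact hδ'
  have hliminfW : liminf (fun n => slopeFn (fs n) (W n)) atTop ≤ ((K : ℝ) : EReal) := by
    refine le_trans (liminf_le_comp_strictMono hτm) ?_
    refine liminf_le_of_frequently_le (Frequently.of_forall fun k => ?_) (by isBoundedDefault)
    rw [hWτ k]
    exact hzslope (ψ k)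
  have hslope : slopeFn f zstar ≤ ((K : ℝ) : EReal) :=
    le_trans (hepi zstar).2 (le_trans (iInf₂_le W hWt) hliminfW)
  obtain ⟨v, hv, -⟩ :=
    exists_subdiff_of_slope_lt (lt_of_le_of_lt hslope (EReal.coe_lt_top K))
  refine ⟨zstar, ⟨v, hv⟩, ?_⟩
  rw [dist_comm]
  calc dist zstar x' ≤ 2 * ε := mem_closedBall.mp hzstarB
    _ < δ := hεδ

theorem dom_inclusions {d : ℕ} (f : EuclideanSpace ℝ (Fin d) → EReal) (fs : ℕ → EuclideanSpace ℝ (Fin d) → EReal)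
    (hpf : Proper f) (hcf : ConvexFn f) (hlf : LowerSemicontinuous f)
    (hps : ∀ n, Proper (fs n)) (hcs : ∀ n, ConvexFn (fs n))
    (hls : ∀ n, LowerSemicontinuous (fs n))
    (hepi : EpiConv (fun n => slopeFn (fs n)) (slopeFn f))
    (x : ℕ → EuclideanSpace ℝ (Fin d)) (xbar : EuclideanSpace ℝ (Fin d)) (α : ℝ)
    (hxbar : xbar ∈ domSub f)
    (hbdd : ∃ M : ℝ, ∀ n, slopeFn (fs n) (x n) ≤ (M : EReal))
    (hx : Filter.Tendsto x atTop (𝓝 xbar))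
    (hval : Filter.Tendsto (fun n => fs n (x n)) atTop (𝓝 ((α : EReal)))) :
    domSub f ⊆ rdom (eLiminf fs) ∩ rdom (eLimsup fs) ∧
      rdom (eLiminf fs) ∪ rdom (eLimsup fs) ⊆ closure (domSub f) ∧
      closure (domSub f) = closure (edom f) := by
  classical
  obtain ⟨M, hM⟩ := hbdd
  have hle : ∀ x', eLiminf fs x' ≤ eLimsup fs x' := eLiminf_le_eLimsup fs
  have hlow : ∀ x', ((α - 1 - (M + 1) * (‖x' - xbar‖ + 1) : ℝ) : EReal) ≤ eLiminf fs x' :=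
    fun x' => eLiminf_lower' hps hM hx hval x'
  have hnb1 : ∀ x', eLiminf fs x' ≠ ⊥ := by
    intro x' h
    have h1 := hlow x'
    rw [h, le_bot_iff] at h1
    exact EReal.coe_ne_bot _ h1
  have hnb2 : ∀ x', eLimsup fs x' ≠ ⊥ := by
    intro x' h
    have h1 := hle x'
    rw [h, le_bot_iff] at h1
    exact hnb1 x' h1
  refine ⟨?_, ?_, ?_⟩
  · intro x' hx'
    obtain ⟨r, hr⟩ := eLimsup_upper hps hepi hx hval hx'
    have hnt2 : eLimsup fs x' ≠ ⊤ := by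
      intro h
      rw [h, top_le_iff] at hr
      exact EReal.coe_ne_top r hr
    have hnt1 : eLiminf fs x' ≠ ⊤ := by
      intro h
      have h1 := hle x'
      rw [h, top_le_iff] at h1
      exact hnt2 h1
    exact ⟨⟨hnt1, hnb1 x'⟩, ⟨hnt2, hnb2 x'⟩⟩
  · intro x' hx'
    have hnt : eLiminf fs x' ≠ ⊤ := by
      rcases hx' with h | h
      · exact h.1
      · intro htop
        have h1 := hle x'
        rw [htop, top_le_iff] at h1
        exact h.1 h1
    exact mem_closure_of_eLiminf_ne_top hps hcs hls hepi hM hx hval hnt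
  · refine Subset.antisymm (closure_mono fun z hz => ?_) ?_
    · exact hz.some_mem.1
    · exact closure_minimal (edom_subset_closure_domSub hpf hcf hlf hxbar) isClosed_closure
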